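/- With the same setup, f_{s,t}(r) = x_{s,r} - ∑_{k=t}^{s-1} x_{k,r}·f_{s,k+1}(k+1) for all 0 ≤ t < s ≤ n and |r| ≤ n+1. -/

import Mathlib

open Matrix Finset Equiv

/-- `fdet x s t r` is the determinant `f_{s,t}(r) = F_{s,t}(t+1, …, s, r)` of the
`(s-t+1)×(s-t+1)` matrix with rows indexed by `l = t, …, s` and columns given by
the index list `(t+1, …, s, r)`, with entries `x l θ`. -/
noncomputable def fdet {R : Type*} [CommRing R] (x : ℕ → ℤ → R) (s t : ℕ) (r : ℤ) : R :=
  Matrix.det (Matrix.of fun a b : Fin (s - t + 1) =>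
    x (t + (a : ℕ)) (if (b : ℕ) = s - t then r else (t : ℤ) + 1 + (b : ℕ)))

section aux

variable {R : Type*} [CommRing R]

private lemma det_expand_aux (N : ℕ) (A : Matrix (Fin (N+2)) (Fin (N+2)) R)
    (h0 : A 0 0 = 1)
    (hz : ∀ j : Fin (N+2), 0 < (j:ℕ) → (j:ℕ) < N+1 → A 0 j = 0) :
    A.det = (A.submatrix Fin.succ (Fin.succAbove 0)).det
      + (-1)^(N+1) * A 0 (Fin.last (N+1))
        * (A.submatrix Fin.succ (Fin.succAbove (Fin.last (N+1)))).det := by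
  rw [Matrix.det_succ_row_zero, Fin.sum_univ_succ]
  have h : ∑ j : Fin (N+1), (-1:R)^(((j.succ : Fin (N+2))):ℕ) * A 0 j.succ
      * (A.submatrix Fin.succ (Fin.succAbove j.succ)).det
      = (-1)^(N+1) * A 0 (Fin.last (N+1))
        * (A.submatrix Fin.succ (Fin.succAbove (Fin.last (N+1)))).det := by
    rw [Finset.sum_eq_single (Fin.last N)]
    · rw [Fin.succ_last]
      simp
    · intro j _ hj
      have h2 : ((j.succ : Fin (N+2)) : ℕ) < N+1 := by
        have := Fin.val_lt_last hj
        simp only [Fin.val_succ]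
        omega
      rw [hz _ (by simp) h2]
      ring
    · simp
  rw [h, h0]
  simp only [Fin.val_zero, pow_zero]
  ring

private lemma fdet_cast (x : ℕ → ℤ → R) (s t : ℕ) (r : ℤ) (N : ℕ) (h : s - t = N) :
    fdet x s t r = Matrix.det (Matrix.of fun a b : Fin (N+1) =>
      x (t + (a : ℕ)) (if (b : ℕ) = N then r else (t : ℤ) + 1 + (b : ℕ))) := by
  subst h; rfl

private lemma fdet_self (x : ℕ → ℤ → R) (s : ℕ) (r : ℤ) : fdet x s s r = x s r := by
  rw [fdet_cast x s s r 0 (Nat.sub_self s)]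
  rw [Matrix.det_fin_one]
  simp

private lemma fdet_rec (x : ℕ → ℤ → R)
    (hx1 : ∀ i : ℕ, x i ((i : ℤ) + 1) = 1)
    (hx0 : ∀ (i : ℕ) (j : ℤ), (i : ℤ) + 1 < j → x i j = 0)
    {t s : ℕ} (h : t < s) (r : ℤ) :
    fdet x s t r = fdet x s (t+1) r - x t r * fdet x s (t+1) ((t : ℤ) + 1) := by
  obtain ⟨N, hN⟩ : ∃ N, s - t = N + 1 := ⟨s - t - 1, by omega⟩
  rw [fdet_cast x s t r (N+1) hN]
  set A : Matrix (Fin (N+2)) (Fin (N+2)) R := Matrix.of fun a b : Fin (N+2) =>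
      x (t + (a : ℕ)) (if (b : ℕ) = N+1 then r else (t : ℤ) + 1 + (b : ℕ)) with hA
  have hz : ∀ j : Fin (N+2), 0 < (j:ℕ) → (j:ℕ) < N+1 → A 0 j = 0 := by
    intro j h1 h2
    simp only [hA, Matrix.of_apply, Fin.val_zero, Nat.add_zero]
    rw [if_neg (by omega)]
    apply hx0
    have : (1:ℤ) ≤ ((j:ℕ) : ℤ) := by exact_mod_cast h1
    omega
  rw [det_expand_aux N A (by simp [hA, hx1 t]) hz]
  set σ : Equiv.Perm (Fin (N+1)) := (finRotate (N+1))⁻¹ with hσ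
  set P : Matrix (Fin (N+1)) (Fin (N+1)) R := Matrix.of fun a b : Fin (N+1) =>
      x ((t+1) + (a : ℕ)) (if (b : ℕ) = N then ((t:ℤ)+1) else ((t+1 : ℕ) : ℤ) + 1 + (b : ℕ)) with hP
  have e1 : (A.submatrix Fin.succ (Fin.succAbove 0)) = Matrix.of (fun a b : Fin (N+1) =>
      x ((t+1) + (a : ℕ)) (if (b : ℕ) = N then r else ((t+1 : ℕ) : ℤ) + 1 + (b : ℕ))) := by
    ext a b
    simp only [hA, Matrix.submatrix_apply, Matrix.of_apply, Fin.zero_succAbove, Fin.val_succ]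
    by_cases hbn : (b:ℕ) = N
    · rw [if_pos (by omega), if_pos hbn]
      congr 1
      omega
    · rw [if_neg (by omega), if_neg hbn]
      congr 1
      · omega
      · push_cast
        ring
  have e2 : (A.submatrix Fin.succ (Fin.succAbove (Fin.last (N+1)))) = P.submatrix id ⇑σ := by
    ext a b
    have hval : ((σ b : Fin (N+1)) : ℕ) = if (b:ℕ) = 0 then N else (b:ℕ) - 1 := by
      have hfw : finRotate (N+1) (σ b) = b := Equiv.apply_symm_apply _ _
      rw [finRotate_succ_apply] at hfw
      set c := σ b with hc
      have h1 : ((c + 1 : Fin (N+1)) : ℕ) = ((c:ℕ) + 1) % (N+1) := by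
        simp [Fin.add_def]
      have hb' : (b:ℕ) = ((c:ℕ) + 1) % (N+1) := by rw [← h1, hfw]
      have hcN : (c:ℕ) ≤ N := by omega
      by_cases hcen : (c:ℕ) = N
      · rw [hcen] at hb'
        simp at hb'
        rw [if_pos (by simp [hb']), hcen]
      · have h2 : ((c:ℕ) + 1) % (N+1) = (c:ℕ) + 1 := Nat.mod_eq_of_lt (by omega)
        rw [h2] at hb'
        rw [if_neg (by omega)]
        omega
    simp only [hA, hP, Matrix.submatrix_apply, Matrix.of_apply, id]
    rw [Fin.succAbove_of_castSucc_lt _ _ (Fin.castSucc_lt_last b), Fin.coe_castSucc,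
      Fin.val_succ, if_neg (by omega), hval]
    by_cases hb0 : (b:ℕ) = 0
    · rw [if_pos hb0, if_pos rfl, hb0]
      congr 1 <;> omega
    · rw [if_neg hb0, if_neg (by omega)]
      congr 1 <;> omega
  have hsign : Equiv.Perm.sign σ = (-1)^N := by
    rw [hσ, map_inv, sign_finRotate]
    simp [inv_pow]
  rw [e1, e2, Matrix.det_permute' σ P, hsign]
  rw [← fdet_cast x s (t+1) r N (by omega), ← fdet_cast x s (t+1) ((t:ℤ)+1) N (by omega)]
  have hA0 : A 0 (Fin.last (N+1)) = x t r := by simp [hA]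
  rw [hA0]
  have hu : (((-1:ℤˣ)^N : ℤˣ) : ℤ) = (-1:ℤ)^N := by push_cast; ring
  have hpow : ((((-1:ℤˣ)^N : ℤˣ) : ℤ) : R) * (-1:R)^(N+1) = -1 := by
    rw [hu]
    push_cast
    rw [← pow_add, show N + (N+1) = 2*N+1 by omega, pow_succ, pow_mul]
    norm_num
  have expand : (-1:R)^(N+1) * x t r * (((((-1:ℤˣ)^N : ℤˣ) : ℤ) : R) * fdet x s (t+1) ((t:ℤ)+1))
      = - (x t r * fdet x s (t+1) ((t:ℤ)+1)) := by
    calc (-1:R)^(N+1) * x t r * (((((-1:ℤˣ)^N : ℤˣ) : ℤ) : R) * fdet x s (t+1) ((t:ℤ)+1))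
        = (((((-1:ℤˣ)^N : ℤˣ) : ℤ) : R) * (-1:R)^(N+1)) * (x t r * fdet x s (t+1) ((t:ℤ)+1)) := by ring
      _ = - (x t r * fdet x s (t+1) ((t:ℤ)+1)) := by rw [hpow]; ring
  rw [expand]
  ring

end aux

/-- Lemma 2.1, second identity: with the conventions `x_{i,i+1} = 1` and `x_{i,j} = 0`
for `j > i+1`, one has `f_{s,t}(r) = x_{s,r} - ∑_{k=t}^{s-1} x_{k,r} f_{s,k+1}(k+1)`
for `0 ≤ t < s ≤ n` and `|r| ≤ n+1`. -/
theorem fdet_column_expansion {R : Type*} [CommRing R] (n : ℕ) (x : ℕ → ℤ → R)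
    (hx1 : ∀ i : ℕ, x i ((i : ℤ) + 1) = 1)
    (hx0 : ∀ (i : ℕ) (j : ℤ), (i : ℤ) + 1 < j → x i j = 0)
    (t s : ℕ) (hts : t < s) (hsn : s ≤ n) (r : ℤ) (hr : |r| ≤ (n : ℤ) + 1) :
    fdet x s t r = x s r - ∑ k ∈ Finset.Icc t (s - 1), x k r * fdet x s (k + 1) ((k : ℤ) + 1) := by
  have key : ∀ d t, t < s → s - t = d + 1 →
      fdet x s t r = x s r - ∑ k ∈ Finset.Icc t (s - 1), x k r * fdet x s (k + 1) ((k : ℤ) + 1) := by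
    intro d
    induction d with
    | zero =>
      intro t ht hd
      have hts1 : t + 1 = s := by omega
      rw [fdet_rec x hx1 hx0 ht, hts1, fdet_self]
      have : Finset.Icc t (s - 1) = {t} := by rw [show s - 1 = t by omega, Finset.Icc_self]
      rw [this, Finset.sum_singleton, hts1]
    | succ d ih =>
      intro t ht hd
      rw [fdet_rec x hx1 hx0 ht, ih (t+1) (by omega) (by omega)]
      have hins : Finset.Icc t (s-1) = insert t (Finset.Icc (t+1) (s-1)) := by
        ext k
        simp only [Finset.mem_Icc, Finset.mem_insert]
        omega
      rw [hins, Finset.sum_insert (by simp)]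
      ring
  exact key (s - t - 1) t hts (by omega)
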